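/- The word-equation AFT construction is correct: for the (n+1)-track AFT R with states q₀,…,q_n, initial formula q₀, final formula requiring exactly the run to end having passed through all q_i (accepting in q_n), and transitions Δ(q_{i−1}) = (q_{i−1} ∨ q_i) ∧ ⋀_{j∈[n]\{i}} e^j ∧ ⋀_v (v^i ↔ v^0) for i ∈ [n] and Δ(q_n) = false, the relation recognised by R is exactly {(x, x₁, …, x_n) : x = x₁ ∘ x₂ ∘ ⋯ ∘ x_n}, i.e., R encodes the word equation x = x₁∘⋯∘x_n. -/

import Mathlib

/-- Boolean formulae over variables of type `α`. -/
inductive BF (α : Type) : Type where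
  | var : α → BF α
  | tru : BF α
  | fls : BF α
  | and : BF α → BF α → BF α
  | or  : BF α → BF α → BF α
  | not : BF α → BF α

namespace BF

variable {α β : Type}

/-- Evaluation of a Boolean formula under an assignment. -/
def eval (A : α → Bool) : BF α → Bool
  | var v => A v
  | tru => true
  | fls => false
  | and f g => f.eval A && g.eval A
  | or f g => f.eval A || g.eval A
  | not f => ! f.eval A

/-- `PolarOn P b φ` holds iff every occurrence of a variable satisfying `P`
is under an even number of negations when `b = true`, resp. an odd number
of negations when `b = false`. -/
def PolarOn (P : α → Prop) : Bool → BF α → Prop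
  | b, var v => P v → b = true
  | _, tru => True
  | _, fls => True
  | b, and f g => PolarOn P b f ∧ PolarOn P b g
  | b, or f g => PolarOn P b f ∧ PolarOn P b g
  | b, not f => PolarOn P (!b) f

/-- A formula is positive if every variable occurs under an even number of negations. -/
def Positive (φ : BF α) : Prop := PolarOn (fun _ => True) true φ

/-- A formula is negative if every variable occurs under an odd number of negations. -/
def Negative (φ : BF α) : Prop := PolarOn (fun _ => True) false φ

/-- Renaming of variables. -/
def map (f : α → β) : BF α → BF β
  | var v => var (f v)
  | tru => tru
  | fls => fls
  | and g h => and (g.map f) (h.map f)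
  | or g h => or (g.map f) (h.map f)
  | not g => not (g.map f)

/-- The set of variables occurring in a formula. -/
def varSet : BF α → Set α
  | var v => {v}
  | tru => ∅
  | fls => ∅
  | and f g => f.varSet ∪ g.varSet
  | or f g => f.varSet ∪ g.varSet
  | not f => f.varSet

/-- Finite conjunction. -/
def bigAnd (l : List (BF α)) : BF α := l.foldr and tru

/-- Finite disjunction. -/
def bigOr (l : List (BF α)) : BF α := l.foldr or fls

/-- Biconditional. -/
def iff (f g : BF α) : BF α := (f.and g).or (f.not.and g.not)

end BF

/-- A succinct alternating finite automaton over input bit variables `ι` and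
states `Q`: the transition function assigns to each state a Boolean formula
over input variables and states, and there are an initial and a final formula
over states. -/
structure AFA (ι Q : Type) where
  delta : Q → BF (ι ⊕ Q)
  init : BF Q
  final : BF Q

namespace AFA

variable {ι Q Q' : Type}

/-- Well-formedness of a succinct AFA: transition formulae are positive on
states, the initial formula is positive, and the final formula is negative. -/
def WF (M : AFA ι Q) : Prop :=
  (∀ q, BF.PolarOn (fun x => ∃ p, x = Sum.inr p) true (M.delta q)) ∧
    M.init.Positive ∧ M.final.Negative

/-- One step of a run: every state active in `α` has its transition formula
satisfied by the input letter `b` together with the successor configuration `α'`. -/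
def Step (M : AFA ι Q) (α : Q → Bool) (b : ι → Bool) (α' : Q → Bool) : Prop :=
  ∀ q, α q = true → (M.delta q).eval (Sum.elim b α') = true

/-- A run of the AFA over the word `w`, given by its sequence of configurations. -/
def IsRun (M : AFA ι Q) (w : List (ι → Bool)) (αs : Fin (w.length + 1) → Q → Bool) : Prop :=
  ∀ i : Fin w.length, M.Step (αs i.castSucc) (w.get i) (αs i.succ)

/-- Acceptance: there is a run whose first configuration satisfies the initial
formula and whose last configuration satisfies the final formula. -/
def Accepts (M : AFA ι Q) (w : List (ι → Bool)) : Prop :=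
  ∃ αs : Fin (w.length + 1) → Q → Bool,
    M.IsRun w αs ∧ M.init.eval (αs 0) = true ∧
      M.final.eval (αs (Fin.last w.length)) = true

/-- The language of an AFA. -/
def Lang (M : AFA ι Q) : Set (List (ι → Bool)) := {w | M.Accepts w}

/-- Product (intersection) construction on AFAs with disjoint state sets. -/
def inter (M : AFA ι Q) (M' : AFA ι Q') : AFA ι (Q ⊕ Q') where
  delta := fun q => match q with
    | .inl q => (M.delta q).map (Sum.map id Sum.inl)
    | .inr q => (M'.delta q).map (Sum.map id Sum.inr)
  init := (M.init.map Sum.inl).and (M'.init.map Sum.inr)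
  final := (M.final.map Sum.inl).and (M'.final.map Sum.inr)

/-- Union construction on AFAs with disjoint state sets. -/
def union (M : AFA ι Q) (M' : AFA ι Q') : AFA ι (Q ⊕ Q') where
  delta := fun q => match q with
    | .inl q => (M.delta q).map (Sum.map id Sum.inl)
    | .inr q => (M'.delta q).map (Sum.map id Sum.inr)
  init := (M.init.map Sum.inl).or (M'.init.map Sum.inr)
  final := (M.final.map Sum.inl).and (M'.final.map Sum.inr)

end AFA
/-- A `k`-track letter over value bit variables `V` and epsilon bit variables `E`
is an assignment to the indexed bit variables `(V ⊕ E) × Fin k`.  The word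
carried by track `i` is obtained by erasing all positions in which some epsilon
bit of track `i` is set, and restricting the remaining letters to the value
bits of track `i`. -/
def trackWord {V E : Type} [Fintype E] {k : ℕ}
    (w : List ((V ⊕ E) × Fin k → Bool)) (i : Fin k) : List (V → Bool) :=
  (w.filter fun b => ! decide (∃ e : E, b (Sum.inr e, i) = true)).map
    fun b v => b (Sum.inl v, i)

/-- A `k`-track AFT `M` (an AFA over `(V ⊕ E) × Fin k`) recognises the tuple of
words `t` iff it accepts some word whose track projections are exactly `t`. -/
def AFA.RelAccepts {V E : Type} [Fintype E] {k : ℕ} {Q : Type}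
    (M : AFA ((V ⊕ E) × Fin k) Q) (t : Fin k → List (V → Bool)) : Prop :=
  ∃ w, M.Accepts w ∧ ∀ i, trackWord w i = t i

/-- A succinct alternating automaton/transducer with synchronisation parameters
`P`: the initial and final formulae may mention parameters (positively and
negatively) besides states. -/
structure PAFA (ι P Q : Type) where
  delta : Q → BF (ι ⊕ Q)
  init : BF (P ⊕ Q)
  final : BF (P ⊕ Q)

namespace PAFA

variable {ι P Q : Type}

/-- Well-formedness: transitions positive on states, the initial formula
positive on states, the final formula negative on states (parameters may occur
with both polarities). -/
def WF (M : PAFA ι P Q) : Prop :=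
  (∀ q, BF.PolarOn (fun x => ∃ p, x = Sum.inr p) true (M.delta q)) ∧
    BF.PolarOn (fun x => ∃ q, x = Sum.inr q) true M.init ∧
    BF.PolarOn (fun x => ∃ q, x = Sum.inr q) false M.final

/-- Acceptance of a word with a given parameter assignment `π`. -/
def AcceptsWith (M : PAFA ι P Q) (π : P → Bool) (w : List (ι → Bool)) : Prop :=
  ∃ αs : Fin (w.length + 1) → Q → Bool,
    (∀ i : Fin w.length, ∀ q, αs i.castSucc q = true →
        (M.delta q).eval (Sum.elim (w.get i) (αs i.succ)) = true) ∧
    M.init.eval (Sum.elim π (αs 0)) = true ∧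
    M.final.eval (Sum.elim π (αs (Fin.last w.length))) = true

/-- A `k`-track AFT with parameters recognises the tuple `t` with parameter
assignment `π` iff it accepts with `π` some word whose track projections are `t`. -/
def RelAcceptsWith {V E : Type} [Fintype E] {k : ℕ}
    (M : PAFA ((V ⊕ E) × Fin k) P Q) (π : P → Bool)
    (t : Fin k → List (V → Bool)) : Prop :=
  ∃ w, M.AcceptsWith π w ∧ ∀ i, trackWord w i = t i

end PAFA

/-- All bit variables of a track: the `nv` value bits and the epsilon bit. -/
def allBits (nv : ℕ) : List (Fin nv ⊕ Fin 1) :=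
  ((List.finRange nv).map Sum.inl) ++ [Sum.inr 0]

/-- The `(n+1)`-track AFT for the word equation `x = x₁ ∘ ⋯ ∘ x_n`: states
`q₀,…,q_n`, initial formula `q₀`, final formula accepting in `q_n`, and
transitions `Δ(q_{i−1}) = (q_{i−1} ∨ q_i) ∧ ⋀_{j∈[n]\{i}} e^j ∧ ⋀_v (v^i ↔ v^0)`
(copy the symbol of track 0 to track `i` while all other tracks read epsilon),
and `Δ(q_n) = false`. -/
def weqAFT (nv n : ℕ) : AFA ((Fin nv ⊕ Fin 1) × Fin (n + 1)) (Fin (n + 1)) where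
  delta := fun s =>
    if h : (s : ℕ) < n then
      let t : Fin (n + 1) := ⟨(s : ℕ) + 1, by omega⟩
      ((BF.var (Sum.inr s)).or (BF.var (Sum.inr t))).and
        ((BF.bigAnd (((List.finRange (n + 1)).filter
              (fun j => decide (j ≠ 0 ∧ j ≠ t))).map
            fun j => BF.var (Sum.inl (Sum.inr 0, j)))).and
          (BF.bigAnd ((allBits nv).map fun v =>
            (BF.var (Sum.inl (v, t))).iff (BF.var (Sum.inl (v, 0))))))
    else BF.fls
  init := BF.var 0
  final := BF.bigAnd (((List.finRange (n + 1)).filter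
      (fun j : Fin (n + 1) => decide ((j : ℕ) ≠ n))).map
    fun j => (BF.var j).not)

/-! ### Auxiliary lemmas for the correctness proof -/

namespace WeqAux

open BF

lemma eval_bigAnd {α : Type} (l : List (BF α)) (A : α → Bool) :
    (BF.bigAnd l).eval A = true ↔ ∀ f ∈ l, f.eval A = true := by
  induction l with
  | nil => simp [BF.bigAnd, BF.eval]
  | cons a l ih => simp [BF.bigAnd, BF.eval, List.foldr] at ih ⊢; tauto

lemma eval_iff {α : Type} (f g : BF α) (A : α → Bool) :
    ((f.iff g).eval A = true) ↔ f.eval A = g.eval A := by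
  simp only [BF.iff, BF.eval]
  cases hf : f.eval A <;> cases hg : g.eval A <;> simp

lemma mem_allBits (nv : ℕ) (v : Fin nv ⊕ Fin 1) : v ∈ allBits nv := by
  cases v with
  | inl v => simp [allBits]
  | inr e =>
    have : e = 0 := Subsingleton.elim _ _
    simp [allBits, this]

variable {nv n : ℕ}

/-- The letter type of the word-equation AFT. -/
abbrev WLetter (nv n : ℕ) := (Fin nv ⊕ Fin 1) × Fin (n + 1) → Bool

lemma weq_delta_eval (s : Fin (n + 1)) (hs : (s : ℕ) < n)
    (A : (Fin nv ⊕ Fin 1) × Fin (n + 1) ⊕ Fin (n + 1) → Bool) :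
    (((weqAFT nv n).delta s).eval A = true) ↔
      ((A (Sum.inr s) = true ∨ A (Sum.inr ⟨(s : ℕ) + 1, by omega⟩) = true) ∧
       (∀ j : Fin (n + 1), j ≠ 0 → j ≠ ⟨(s : ℕ) + 1, by omega⟩ →
          A (Sum.inl (Sum.inr 0, j)) = true) ∧
       (∀ v : Fin nv ⊕ Fin 1,
          A (Sum.inl (v, ⟨(s : ℕ) + 1, by omega⟩)) = A (Sum.inl (v, 0)))) := by
  simp only [weqAFT]
  rw [dif_pos hs]
  simp only [BF.eval, Bool.and_eq_true, Bool.or_eq_true, eval_bigAnd]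
  constructor
  · rintro ⟨h1, h2, h3⟩
    refine ⟨h1, ?_, ?_⟩
    · intro j hj0 hjt
      exact h2 _ (List.mem_map_of_mem (by
        simp only [List.mem_filter, List.mem_finRange, true_and, decide_eq_true_eq]
        exact ⟨hj0, hjt⟩))
    · intro v
      have := h3 _ (List.mem_map_of_mem (mem_allBits nv v))
      rw [eval_iff] at this
      exact this
  · rintro ⟨h1, h2, h3⟩
    refine ⟨h1, ?_, ?_⟩
    · intro f hf
      simp only [List.mem_map, List.mem_filter, List.mem_finRange, true_and,
        decide_eq_true_eq] at hf
      obtain ⟨j, ⟨hj0, hjt⟩, rfl⟩ := hf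
      exact h2 j hj0 hjt
    · intro f hf
      simp only [List.mem_map] at hf
      obtain ⟨v, -, rfl⟩ := hf
      rw [eval_iff]
      exact h3 v

lemma weq_delta_last (s : Fin (n + 1)) (hs : ¬ (s : ℕ) < n)
    (A : (Fin nv ⊕ Fin 1) × Fin (n + 1) ⊕ Fin (n + 1) → Bool) :
    ((weqAFT nv n).delta s).eval A = false := by
  simp only [weqAFT]
  rw [dif_neg hs]
  rfl

lemma weq_final_eval (α : Fin (n + 1) → Bool) :
    (((weqAFT nv n).final).eval α = true) ↔
      ∀ j : Fin (n + 1), (j : ℕ) ≠ n → α j = false := by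
  simp only [weqAFT, eval_bigAnd, List.pure_def, List.bind_eq_flatMap,
    ← List.map_eq_flatMap, List.filter_map, List.map_map, Function.comp_def,
    Fin.cast_val_eq_self]
  constructor
  · intro h j hj
    have hmem : j ∈ (List.finRange (n + 1)).filter
        (fun j : Fin (n + 1) => decide ((j : ℕ) ≠ n)) :=
      List.mem_filter.mpr ⟨List.mem_finRange j, decide_eq_true hj⟩
    have := h _ (List.mem_map_of_mem hmem)
    simpa only [BF.eval, Bool.not_eq_true'] using this
  · intro h f hf
    obtain ⟨j, hjmem, rfl⟩ := List.mem_map.mp hf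
    have hj : (j : ℕ) ≠ n := of_decide_eq_true (List.mem_filter.mp hjmem).2
    simpa only [BF.eval, Bool.not_eq_true'] using h j hj

lemma trackWord_nil {V : Type} {k : ℕ} (i : Fin k) :
    trackWord ([] : List ((V ⊕ Fin 1) × Fin k → Bool)) i = [] := rfl

lemma trackWord_cons {V : Type} {k : ℕ} (b : (V ⊕ Fin 1) × Fin k → Bool)
    (w : List ((V ⊕ Fin 1) × Fin k → Bool)) (i : Fin k) :
    trackWord (b :: w) i =
      if b (Sum.inr 0, i) = true then trackWord w i
      else (fun v => b (Sum.inl v, i)) :: trackWord w i := by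
  simp only [trackWord, List.filter_cons]
  by_cases h : b (Sum.inr 0, i) = true
  · rw [if_pos h]
    have : (∃ e : Fin 1, b (Sum.inr e, i) = true) := ⟨0, h⟩
    simp [this]
  · rw [if_neg h]
    have : ¬ (∃ e : Fin 1, b (Sum.inr e, i) = true) := by
      rintro ⟨e, he⟩
      exact h (by rwa [Subsingleton.elim (0 : Fin 1) e])
    simp [this]

lemma trackWord_append {V : Type} {k : ℕ}
    (w₁ w₂ : List ((V ⊕ Fin 1) × Fin k → Bool)) (i : Fin k) :
    trackWord (w₁ ++ w₂) i = trackWord w₁ i ++ trackWord w₂ i := by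
  simp [trackWord, List.filter_append]

lemma trackWord_flatten {V : Type} {k : ℕ}
    (ws : List (List ((V ⊕ Fin 1) × Fin k → Bool))) (i : Fin k) :
    trackWord ws.flatten i = (ws.map (trackWord · i)).flatten := by
  induction ws with
  | nil => rfl
  | cons a ws ih => simp [trackWord_append, ih]

lemma flatten_ofFn_cons_at {γ : Type} :
    ∀ {m : ℕ} (f f' : Fin m → List γ) (s : Fin m) (a : γ),
      (∀ i, i ≠ s → f' i = f i) → f' s = a :: f s →
      (∀ i : Fin m, (i : ℕ) < (s : ℕ) → f i = []) →
      (List.ofFn f').flatten = a :: (List.ofFn f).flatten := by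
  intro m
  induction m with
  | zero => intro f f' s; exact s.elim0
  | succ m ih =>
    intro f f' s a hne hs hlt
    induction s using Fin.cases with
    | zero =>
      rw [List.ofFn_succ, List.ofFn_succ, List.flatten_cons, List.flatten_cons, hs]
      have : (fun i : Fin m => f' i.succ) = fun i : Fin m => f i.succ :=
        funext fun i => hne _ (Fin.succ_ne_zero _)
      rw [this]
      rfl
    | succ j =>
      rw [List.ofFn_succ, List.ofFn_succ, List.flatten_cons, List.flatten_cons]
      have h0 : f 0 = [] := hlt 0 (by simp)
      have h0' : f' 0 = f 0 := hne 0 (by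
        intro h
        exact (Fin.succ_ne_zero j) h.symm)
      rw [h0', h0]
      have := ih (fun i => f i.succ) (fun i => f' i.succ) j a
        (fun i hi => hne i.succ (by simpa using hi))
        hs
        (fun i hi => hlt i.succ (by simpa using hi))
      rw [List.nil_append, List.nil_append, this]

lemma flatten_ofFn_single {γ : Type} :
    ∀ {m : ℕ} (k : Fin m) (f : Fin m → List γ),
      (∀ i, i ≠ k → f i = []) → (List.ofFn f).flatten = f k := by
  intro m
  induction m with
  | zero => intro k; exact k.elim0
  | succ m ih =>
    intro k f hne
    induction k using Fin.cases with
    | zero =>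
      rw [List.ofFn_succ, List.flatten_cons]
      have : (fun i : Fin m => f i.succ) = fun _ : Fin m => ([] : List γ) :=
        funext fun i => hne _ (Fin.succ_ne_zero _)
      rw [this]
      simp
    | succ j =>
      rw [List.ofFn_succ, List.flatten_cons]
      have h0 : f 0 = [] := hne 0 (by
        intro h
        exact (Fin.succ_ne_zero j) h.symm)
      rw [h0, List.nil_append]
      exact ih j (fun i => f i.succ) (fun i hi => hne i.succ (by simpa using hi))

/-! ### Backward direction -/

lemma weq_back :
    ∀ (w : List (WLetter nv n))
      (αs : Fin (w.length + 1) → Fin (n + 1) → Bool),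
      (weqAFT nv n).IsRun w αs →
      ((weqAFT nv n).final).eval (αs (Fin.last w.length)) = true →
      ∀ s : Fin (n + 1), αs 0 s = true →
        trackWord w 0 = (List.ofFn fun i : Fin n => trackWord w i.succ).flatten ∧
        ∀ i : Fin n, (i : ℕ) < (s : ℕ) → trackWord w i.succ = [] := by
  intro w
  induction w with
  | nil =>
    intro αs _ hfin s hs0
    constructor
    · simp [trackWord_nil]
    · intro i _
      exact trackWord_nil _
  | cons b w ih =>
    intro αs hrun hfin s hs0
    -- the step at position 0
    have hstep0 := hrun ⟨0, Nat.succ_pos _⟩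
    have hcast0 : (⟨0, Nat.succ_pos _⟩ : Fin (b :: w).length).castSucc = 0 := rfl
    rw [hcast0] at hstep0
    rw [show (b :: w).get ⟨0, Nat.succ_pos _⟩ = b from rfl] at hstep0
    have hδ := hstep0 s hs0
    have hsn : (s : ℕ) < n := by
      by_contra hc
      rw [weq_delta_last s hc] at hδ
      exact Bool.false_ne_true hδ
    rw [weq_delta_eval s hsn] at hδ
    obtain ⟨hor, heps, hcopy⟩ := hδ
    simp only [Sum.elim_inl, Sum.elim_inr] at hor heps hcopy
    set t : Fin (n + 1) := ⟨(s : ℕ) + 1, by omega⟩ with ht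
    -- the tail run
    set αs' : Fin (w.length + 1) → Fin (n + 1) → Bool := fun i => αs i.succ with hαs'
    have hrun' : (weqAFT nv n).IsRun w αs' := by
      intro i
      have := hrun i.succ
      rw [show (b :: w).get i.succ = w.get i from rfl] at this
      simpa only [hαs', Fin.succ_castSucc, List.get_cons_succ] using this
    have hfin' : ((weqAFT nv n).final).eval (αs' (Fin.last w.length)) = true := by
      exact hfin
    -- the successor state
    obtain ⟨s', hs'0, hss'⟩ :
        ∃ s' : Fin (n + 1), αs' 0 s' = true ∧ (s : ℕ) ≤ (s' : ℕ) := by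
      cases hor with
      | inl h => exact ⟨s, h, le_refl _⟩
      | inr h => exact ⟨t, h, Nat.le_succ _⟩
    obtain ⟨H1, H2⟩ := ih αs' hrun' hfin' s' hs'0
    -- epsilon analysis of the letter b
    have hcopyE : b (Sum.inr 0, t) = b (Sum.inr 0, 0) := hcopy (Sum.inr 0)
    by_cases hb : b (Sum.inr 0, (0 : Fin (n + 1))) = true
    · -- all-epsilon letter: every track unchanged
      have hall : ∀ i : Fin (n + 1), b (Sum.inr 0, i) = true := by
        intro i
        by_cases hi0 : i = 0
        · rwa [hi0]
        · by_cases hit : i = t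
          · rw [hit, hcopyE]; exact hb
          · exact heps i hi0 hit
      have htw : ∀ i : Fin (n + 1), trackWord (b :: w) i = trackWord w i := by
        intro i
        rw [trackWord_cons, if_pos (hall i)]
      constructor
      · rw [htw 0, H1]
        have : (fun i : Fin n => trackWord (b :: w) i.succ) =
            fun i : Fin n => trackWord w i.succ := funext fun i => htw i.succ
        rw [this]
      · intro i hi
        rw [htw i.succ]
        exact H2 i (lt_of_lt_of_le hi hss')
    · -- a real letter: tracks 0 and t get one more symbol
      have hb' : b (Sum.inr 0, (0 : Fin (n + 1))) = false := by
        cases h : b (Sum.inr 0, (0 : Fin (n + 1))) with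
        | false => rfl
        | true => exact absurd h hb
      have hbt : b (Sum.inr 0, t) = false := by rw [hcopyE, hb']
      set i₀ : Fin n := ⟨(s : ℕ), hsn⟩ with hi₀
      have hti₀ : t = i₀.succ := by
        apply Fin.ext; simp [ht, hi₀]
      set a₀ : Fin nv → Bool := fun v => b (Sum.inl v, (0 : Fin (n + 1))) with ha₀
      have htw0 : trackWord (b :: w) 0 = a₀ :: trackWord w 0 := by
        rw [trackWord_cons, if_neg (by simp [hb'])]
      have htwt : trackWord (b :: w) t = a₀ :: trackWord w t := by
        rw [trackWord_cons, if_neg (by simp [hbt])]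
        congr 1
        funext v
        exact hcopy (Sum.inl v)
      have htwo : ∀ i : Fin (n + 1), i ≠ 0 → i ≠ t →
          trackWord (b :: w) i = trackWord w i := by
        intro i hi0 hit
        rw [trackWord_cons, if_pos (heps i hi0 hit)]
      constructor
      · rw [htw0, H1]
        refine (flatten_ofFn_cons_at (fun i => trackWord w i.succ)
          (fun i => trackWord (b :: w) i.succ) i₀ a₀ ?_ ?_ ?_).symm
        · intro i hi
          show trackWord (b :: w) i.succ = trackWord w i.succ
          refine htwo i.succ (Fin.succ_ne_zero i) ?_
          rw [hti₀]
          intro h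
          exact hi (Fin.succ_injective _ h)
        · show trackWord (b :: w) i₀.succ = a₀ :: trackWord w i₀.succ
          rw [← hti₀]; exact htwt
        · intro i hi
          show trackWord w i.succ = []
          refine H2 i (lt_of_lt_of_le ?_ hss')
          simpa [hi₀] using hi
      · intro i hi
        have hi0 : (i : ℕ) < (s' : ℕ) := lt_of_lt_of_le hi hss'
        have hne : i.succ ≠ t := by
          rw [hti₀]
          intro h
          have := Fin.succ_injective _ h
          rw [this] at hi
          simp [hi₀] at hi
        rw [htwo i.succ (Fin.succ_ne_zero i) hne]
        exact H2 i hi0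

/-! ### Forward direction -/

/-- Singleton configuration. -/
def cfg (s : Fin (n + 1)) : Fin (n + 1) → Bool := fun q => decide (q = s)

/-- One legal move from singleton `s` to singleton `s'` reading `b`. -/
def StepOK (nv n : ℕ) (s : Fin (n + 1)) (b : WLetter nv n) (s' : Fin (n + 1)) : Prop :=
  ((weqAFT nv n).delta s).eval (Sum.elim b (cfg s')) = true

/-- Singleton-path segments. -/
inductive Seg (nv n : ℕ) : Fin (n + 1) → List (WLetter nv n) → Fin (n + 1) → Prop
  | nil (s : Fin (n + 1)) : Seg nv n s [] s
  | cons {s s' r : Fin (n + 1)} {b : WLetter nv n} {w : List (WLetter nv n)} :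
      StepOK nv n s b s' → Seg nv n s' w r → Seg nv n s (b :: w) r

lemma Seg.append {s r u : Fin (n + 1)} {w₁ w₂ : List (WLetter nv n)}
    (h₁ : Seg nv n s w₁ r) (h₂ : Seg nv n r w₂ u) : Seg nv n s (w₁ ++ w₂) u := by
  induction h₁ with
  | nil => exact h₂
  | cons hst _ ih => exact Seg.cons hst (ih h₂)

lemma seg_run {s r : Fin (n + 1)} {w : List (WLetter nv n)}
    (h : Seg nv n s w r) :
    ∃ αs : Fin (w.length + 1) → Fin (n + 1) → Bool,
      (weqAFT nv n).IsRun w αs ∧ αs 0 = cfg s ∧ αs (Fin.last w.length) = cfg r := by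
  induction h with
  | nil s => exact ⟨fun _ => cfg s, fun i => i.elim0, rfl, rfl⟩
  | @cons s s' r b w hst _ ih =>
    obtain ⟨αs', hrun', h0', hl'⟩ := ih
    refine ⟨Fin.cons (cfg s) αs', ?_, Fin.cons_zero _ _, ?_⟩
    · intro i
      induction i using Fin.cases with
      | zero =>
        intro q hq
        rw [Fin.castSucc_zero, Fin.cons_zero] at hq
        replace hq : q = s := by simpa [cfg] using hq
        subst hq
        rw [Fin.cons_succ, h0']
        rw [show (b :: w).get (0 : Fin (w.length + 1)) = b from rfl]
        exact hst
      | succ j =>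
        intro q hq
        rw [← Fin.succ_castSucc, Fin.cons_succ] at hq
        rw [Fin.cons_succ]
        rw [show (b :: w).get j.succ = w.get j from rfl]
        exact hrun' j q hq
    · have hlast : (Fin.last (w.length + 1)) = (Fin.last w.length).succ :=
        (Fin.succ_last _).symm
      rw [show (Fin.last (b :: w).length) = Fin.last (w.length + 1) from rfl,
        hlast, Fin.cons_succ, hl']

/-- The letter of a block: carries value `a` on every track, epsilon on all
tracks except `0` and `i`. -/
def blockLetter (a : Fin nv → Bool) (i : Fin (n + 1)) : WLetter nv n :=
  fun x => Sum.elim (fun v => a v) (fun _ => decide (x.2 ≠ 0 ∧ x.2 ≠ i)) x.1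

/-- The all-epsilon dummy letter. -/
def dummy : WLetter nv n :=
  fun x => Sum.elim (fun _ => false) (fun _ => true) x.1

lemma stepOK_dummy (s : Fin (n + 1)) (hs : (s : ℕ) < n) (s' : Fin (n + 1)) :
    (cfg s' s = true ∨ cfg s' ⟨(s : ℕ) + 1, by omega⟩ = true) →
    StepOK nv n s (dummy) s' := by
  intro h
  unfold StepOK
  rw [weq_delta_eval s hs]
  refine ⟨by simpa using h, ?_, ?_⟩
  · intro j _ _; rfl
  · intro v; cases v <;> rfl

lemma stepOK_block (s : Fin (n + 1)) (hs : (s : ℕ) < n) (a : Fin nv → Bool)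
    (s' : Fin (n + 1))
    (hts : (⟨(s : ℕ) + 1, by omega⟩ : Fin (n + 1)) = Fin.succ ⟨(s : ℕ), hs⟩)
    (h : cfg s' s = true ∨ cfg s' ⟨(s : ℕ) + 1, by omega⟩ = true) :
    StepOK nv n s (blockLetter a ⟨(s : ℕ) + 1, by omega⟩) s' := by
  unfold StepOK
  rw [weq_delta_eval s hs]
  refine ⟨by simpa using h, ?_, ?_⟩
  · intro j hj0 hjt
    simp only [Sum.elim_inl, blockLetter, Sum.elim_inr, decide_eq_true_eq]
    exact ⟨hj0, hjt⟩
  · intro v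
    cases v with
    | inl v => rfl
    | inr e =>
      simp only [Sum.elim_inl, blockLetter, Sum.elim_inr]
      have h1 : ¬((⟨(s : ℕ) + 1, by omega⟩ : Fin (n + 1)) ≠ 0 ∧
          (⟨(s : ℕ) + 1, by omega⟩ : Fin (n + 1)) ≠ ⟨(s : ℕ) + 1, by omega⟩) := by
        intro h; exact h.2 rfl
      have h2 : ¬((0 : Fin (n + 1)) ≠ 0 ∧
          (0 : Fin (n + 1)) ≠ ⟨(s : ℕ) + 1, by omega⟩) := by
        intro h; exact h.1 rfl
      simp [h1, h2]

/-- The word of block `i`: the letters of `l` on tracks `0` and `i.succ`,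
followed by a dummy letter. -/
def blockWord (i : Fin n) (l : List (Fin nv → Bool)) : List (WLetter nv n) :=
  (l.map fun a => blockLetter a i.succ) ++ [dummy]

lemma seg_block (i : Fin n) (l : List (Fin nv → Bool)) :
    Seg nv n i.castSucc (blockWord i l) i.succ := by
  have hval : ((i.castSucc : Fin (n + 1)) : ℕ) = (i : ℕ) := rfl
  have hs : ((i.castSucc : Fin (n + 1)) : ℕ) < n := by rw [hval]; exact i.isLt
  have hts : (⟨((i.castSucc : Fin (n + 1)) : ℕ) + 1, by omega⟩ : Fin (n + 1)) = i.succ := by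
    apply Fin.ext; simp [hval]
  induction l with
  | nil =>
    refine Seg.cons ?_ (Seg.nil _)
    refine stepOK_dummy _ hs _ (Or.inr ?_)
    rw [hts]
    simp [cfg]
  | cons a l ih =>
    refine Seg.cons ?_ ih
    have := stepOK_block (nv := nv) i.castSucc hs a i.castSucc
      (by apply Fin.ext; simp [hval]) (Or.inl (by simp [cfg]))
    rwa [hts] at this

lemma seg_blocks (g : Fin n → List (WLetter nv n))
    (hg : ∀ i : Fin n, Seg nv n i.castSucc (g i) i.succ) :
    ∀ (m : ℕ) (s : Fin (n + 1)) (hsm : (s : ℕ) + m = n),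
      Seg nv n s
        ((List.ofFn fun j : Fin m => g ⟨(s : ℕ) + (j : ℕ), by omega⟩).flatten)
        (Fin.last n) := by
  intro m
  induction m with
  | zero =>
    intro s hsm
    have : s = Fin.last n := by apply Fin.ext; simpa using hsm
    subst this
    exact Seg.nil _
  | succ m ih =>
    intro s hsm
    rw [List.ofFn_succ, List.flatten_cons]
    set i₀ : Fin n := ⟨(s : ℕ), by omega⟩ with hi₀
    have h1 : (⟨(s : ℕ) + ((0 : Fin (m + 1)) : ℕ), by omega⟩ : Fin n) = i₀ := by
      apply Fin.ext
      show (s : ℕ) + ((0 : Fin (m + 1)) : ℕ) = (i₀ : ℕ)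
      simp [hi₀]
    have hseg1 : Seg nv n s (g i₀) i₀.succ := by
      have := hg i₀
      have hcs : i₀.castSucc = s := by apply Fin.ext; simp [hi₀]
      rwa [hcs] at this
    have hseg2 : Seg nv n i₀.succ
        ((List.ofFn fun j : Fin m => g ⟨(s : ℕ) + 1 + (j : ℕ), by omega⟩).flatten)
        (Fin.last n) := ih i₀.succ (by show (s : ℕ) + 1 + m = n; omega)
    have h2 : (List.ofFn fun j : Fin m =>
          g ⟨(s : ℕ) + 1 + (j : ℕ), by omega⟩) =
        (List.ofFn fun j : Fin m =>
          g ⟨(s : ℕ) + ((j.succ : Fin (m + 1)) : ℕ), by omega⟩) := by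
      apply congrArg List.ofFn
      funext j
      congr 1
      apply Fin.ext
      show (s : ℕ) + 1 + (j : ℕ) = (s : ℕ) + ((j.succ : Fin (m + 1)) : ℕ)
      show (s : ℕ) + 1 + (j : ℕ) = (s : ℕ) + ((j : ℕ) + 1)
      omega
    rw [h2] at hseg2
    rw [h1]
    exact hseg1.append hseg2

lemma trackWord_blockLetters (l : List (Fin nv → Bool)) (i : Fin (n + 1))
    (j : Fin (n + 1)) :
    trackWord (l.map fun a => blockLetter a i) j =
      if j = 0 ∨ j = i then l else [] := by
  induction l with
  | nil => simp [trackWord_nil]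
  | cons a l ih =>
    rw [List.map_cons, trackWord_cons]
    by_cases h : j = 0 ∨ j = i
    · have heps : blockLetter a i (Sum.inr 0, j) = false := by
        simp only [blockLetter, Sum.elim_inr, decide_eq_false_iff_not]
        intro hc
        cases h with
        | inl h => exact hc.1 h
        | inr h => exact hc.2 h
      rw [if_neg (by simp [heps]), ih, if_pos h, if_pos h]
      rfl
    · have heps : blockLetter a i (Sum.inr 0, j) = true := by
        simp only [blockLetter, Sum.elim_inr, decide_eq_true_eq]
        push_neg at h
        exact h
      rw [if_pos heps, ih, if_neg h, if_neg h]

lemma trackWord_dummy (j : Fin (n + 1)) :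
    trackWord [(dummy : WLetter nv n)] j = [] := by
  rw [trackWord_cons]
  simp [dummy, trackWord_nil]

lemma trackWord_blockWord (i : Fin n) (l : List (Fin nv → Bool)) (j : Fin (n + 1)) :
    trackWord (blockWord i l) j = if j = 0 ∨ j = i.succ then l else [] := by
  rw [blockWord, trackWord_append, trackWord_blockLetters, trackWord_dummy,
    List.append_nil]

end WeqAux

/-- the word-equation AFT construction is correct: the relation
recognised by `weqAFT nv n` consists exactly of the tuples `(x, x₁, …, x_n)`
with `x = x₁ ∘ x₂ ∘ ⋯ ∘ x_n` (track `0` carries `x` and track `i` carries `x_i`). -/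
theorem weq_aft_correct (nv n : ℕ) (t : Fin (n + 1) → List (Fin nv → Bool)) :
    (weqAFT nv n).RelAccepts t ↔
      t 0 = (List.ofFn fun i : Fin n => t i.succ).flatten := by
  classical
  constructor
  · rintro ⟨w, ⟨αs, hrun, hinit, hfin⟩, htw⟩
    have hα0 : αs 0 0 = true := by
      simpa only [weqAFT, BF.eval] using hinit
    obtain ⟨H1, -⟩ := WeqAux.weq_back w αs hrun hfin 0 hα0
    rw [← htw 0, H1]
    have : (fun i : Fin n => trackWord w i.succ) = fun i : Fin n => t i.succ :=
      funext fun i => htw i.succ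
    rw [this]
  · intro ht
    set w : List (WeqAux.WLetter nv n) :=
      (List.ofFn fun i : Fin n => WeqAux.blockWord i (t i.succ)).flatten with hw
    have hseg : WeqAux.Seg nv n 0 w (Fin.last n) := by
      have h := WeqAux.seg_blocks (fun i => WeqAux.blockWord i (t i.succ))
        (fun i => WeqAux.seg_block i (t i.succ)) n 0 (by simp)
      have heq : (List.ofFn fun j : Fin n =>
            WeqAux.blockWord
              (⟨(((0 : Fin (n + 1))) : ℕ) + (j : ℕ),
                by have h0 : (((0 : Fin (n + 1))) : ℕ) = 0 := Fin.val_zero _; omega⟩ : Fin n)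
              (t (⟨(((0 : Fin (n + 1))) : ℕ) + (j : ℕ),
                by have h0 : (((0 : Fin (n + 1))) : ℕ) = 0 := Fin.val_zero _; omega⟩ : Fin n).succ)) =
          (List.ofFn fun i : Fin n => WeqAux.blockWord i (t i.succ)) := by
        apply congrArg List.ofFn
        funext j
        have : (⟨(((0 : Fin (n + 1))) : ℕ) + (j : ℕ),
            by have h0 : (((0 : Fin (n + 1))) : ℕ) = 0 := Fin.val_zero _; omega⟩ : Fin n) = j := by
          apply Fin.ext
          show (((0 : Fin (n + 1))) : ℕ) + (j : ℕ) = (j : ℕ)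
          simp
        rw [this]
      rw [heq] at h
      exact h
    obtain ⟨αs, hrun, h0, hl⟩ := WeqAux.seg_run hseg
    refine ⟨w, ⟨αs, hrun, ?_, ?_⟩, ?_⟩
    · simp only [weqAFT, BF.eval, h0]
      simp [WeqAux.cfg]
    · rw [hl, WeqAux.weq_final_eval]
      intro j hj
      simp only [WeqAux.cfg, decide_eq_false_iff_not]
      intro hc
      exact hj (by rw [hc]; rfl)
    · intro i
      rw [hw, WeqAux.trackWord_flatten, List.map_ofFn]
      have hcomp : ((fun l => trackWord l i) ∘ fun k : Fin n =>
            WeqAux.blockWord k (t k.succ)) =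
          fun k : Fin n => if i = 0 ∨ i = k.succ then t k.succ else [] := by
        funext k
        exact WeqAux.trackWord_blockWord k (t k.succ) i
      rw [hcomp]
      induction i using Fin.cases with
      | zero =>
        have : (fun k : Fin n => if (0 : Fin (n+1)) = 0 ∨ (0 : Fin (n+1)) = k.succ
              then t k.succ else []) = fun k : Fin n => t k.succ := by
          funext k
          rw [if_pos (Or.inl rfl)]
        rw [this, ← ht]
      | succ j =>
        refine WeqAux.flatten_ofFn_single j _ ?_ |>.trans ?_
        · intro k hk
          rw [if_neg]
          rintro (h | h)
          · exact (Fin.succ_ne_zero j) h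
          · exact hk ((Fin.succ_injective _) h).symm
        · rw [if_pos (Or.inr rfl)]
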